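/- Let K₁ be a field existentially closed in a field K₂, and let O₂ be a henselian valuation ring of K₂. Then O₂ ∩ K₁ is a henselian valuation ring of K₁. -/

import Mathlib

open FirstOrder FirstOrder.Ring Language

open Polynomial

/-- `K₁` is existentially closed in `K₂` (via the embedding `f`). -/
def IsExistentiallyClosedIn {K₁ K₂ : Type*} [Field K₁] [Field K₂]
    [CompatibleRing K₁] [CompatibleRing K₂] (f : K₁ →+* K₂) : Prop :=
  ∀ (p q : ℕ) (χ : Language.ring.BoundedFormula (Fin p) q), χ.IsQF →
    ∀ v : Fin p → K₁, χ.exs.Realize (f ∘ v) → χ.exs.Realize v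

lemma realize_aux {K : Type*} [Field K] [CompatibleRing K] (n : ℕ) (w : Fin (n+1) → K) :
    ((termOfFreeCommRing (∑ i : Fin (n+1),
        FreeCommRing.of (Sum.inl i) * FreeCommRing.of (Sum.inr (0 : Fin 1)) ^ (i : ℕ)) ='
      (0 : Language.ring.Term (Fin (n+1) ⊕ Fin 1)))).exs.Realize w ↔
    ∃ x : K, (∑ i : Fin (n+1), w i * x ^ (i : ℕ)) = 0 := by
  rw [BoundedFormula.realize_exs]
  constructor
  · rintro ⟨xs, hxs⟩
    refine ⟨xs 0, ?_⟩
    simpa [BoundedFormula.realize_bdEqual, realize_termOfFreeCommRing, realize_zero,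
      map_sum, map_mul, map_pow, FreeCommRing.lift_of] using hxs
  · rintro ⟨x, hx⟩
    refine ⟨fun _ => x, ?_⟩
    simpa [BoundedFormula.realize_bdEqual, realize_termOfFreeCommRing, realize_zero,
      map_sum, map_mul, map_pow, FreeCommRing.lift_of] using hx

lemma root_transfer {K₁ K₂ : Type*} [Field K₁] [Field K₂]
    [CompatibleRing K₁] [CompatibleRing K₂] (f : K₁ →+* K₂)
    (hec : IsExistentiallyClosedIn f) (P : K₁[X])
    (hx : ∃ x : K₂, (P.map f).eval x = 0) : ∃ y : K₁, P.eval y = 0 := by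
  set n := P.natDegree with hn
  have h := hec (n+1) 1
    ((termOfFreeCommRing (∑ i : Fin (n+1),
        FreeCommRing.of (Sum.inl i) * FreeCommRing.of (Sum.inr (0 : Fin 1)) ^ (i : ℕ)) ='
      (0 : Language.ring.Term (Fin (n+1) ⊕ Fin 1))))
    ((BoundedFormula.IsAtomic.equal _ _).isQF) (fun i => P.coeff i)
  rw [realize_aux, realize_aux] at h
  obtain ⟨y, hy⟩ := h (by
    obtain ⟨x, hx⟩ := hx
    refine ⟨x, ?_⟩
    have hd : (P.map f).natDegree < n + 1 := by
      rw [natDegree_map]; omega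
    rw [eval_eq_sum_range' hd] at hx
    rw [← hx, ← Fin.sum_univ_eq_sum_range (fun i => (P.map f).coeff i * x ^ i)]
    simp [coeff_map])
  refine ⟨y, ?_⟩
  rw [eval_eq_sum_range, ← Fin.sum_univ_eq_sum_range (fun i => P.coeff i * y ^ i)]
  exact hy

/-- Let `K₁` be existentially closed in `K₂` and `O₂` a henselian valuation ring of
`K₂`. Then the restriction `O₂ ∩ K₁` is a henselian valuation ring of `K₁`. -/
theorem restriction_of_henselian_valuation_to_ec_subfield_henselian
    {K₁ K₂ : Type*} [Field K₁] [Field K₂]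
    [CompatibleRing K₁] [CompatibleRing K₂] (f : K₁ →+* K₂)
    (hec : IsExistentiallyClosedIn f)
    (O₂ : ValuationSubring K₂) (hhens : HenselianLocalRing O₂) :
    HenselianLocalRing (O₂.comap f) := by
  set O₁ := O₂.comap f with hO₁
  -- the inclusion ring hom
  let φ : O₁ →+* O₂ :=
    { toFun := fun x => ⟨f x.1, x.2⟩
      map_one' := by ext; simp
      map_mul' := by intro x y; ext; simp
      map_zero' := by ext; simp
      map_add' := by intro x y; ext; simp }
  have hφval : ∀ x : O₁, (φ x : K₂) = f x.1 := fun _ => rfl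
  have hφinj : Function.Injective φ := by
    intro x y hxy
    have : f x.1 = f y.1 := congrArg Subtype.val hxy
    exact Subtype.ext (f.injective this)
  have hlocal : ∀ x : O₁, IsUnit (φ x) → IsUnit x := by
    rintro x ⟨u, hu⟩
    have h0 : ((u : O₂) : K₂) * (((u⁻¹ : O₂ˣ) : O₂) : K₂) = 1 := by
      have := congrArg (Subtype.val) u.mul_inv
      push_cast at this
      exact this
    rw [hu] at h0
    have h1 : f x.1 * (((u⁻¹ : O₂ˣ) : O₂) : K₂) = 1 := h0
    have hx0 : x.1 ≠ 0 := by
      intro h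
      rw [h, map_zero, zero_mul] at h1
      exact zero_ne_one h1
    have hinv : (((u⁻¹ : O₂ˣ) : O₂) : K₂) = f (x.1⁻¹) := by
      rw [map_inv₀]
      exact eq_inv_of_mul_eq_one_right h1
    have hmem : x.1⁻¹ ∈ O₁ := by
      show f x.1⁻¹ ∈ O₂
      rw [← hinv]; exact ((u⁻¹ : O₂ˣ) : O₂).2
    refine IsUnit.of_mul_eq_one (a := x) ⟨x.1⁻¹, hmem⟩ (Subtype.ext ?_)
    exact mul_inv_cancel₀ hx0
  constructor
  intro F hF a₀ ha₀ hu
  have hF₂ : (F.map φ).Monic := hF.map φ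
  have heval : ∀ (Q : O₁[X]) (x : O₁), (Q.map φ).eval (φ x) = φ (Q.eval x) := by
    intro Q x
    rw [eval_map, eval₂_at_apply]
  have ha₀₂ : (F.map φ).eval (φ a₀) ∈ IsLocalRing.maximalIdeal O₂ := by
    rw [heval, IsLocalRing.mem_maximalIdeal, mem_nonunits_iff]
    intro h
    exact (IsLocalRing.mem_maximalIdeal _).1 ha₀ (hlocal _ h)
  have hu₂ : IsUnit ((F.map φ).derivative.eval (φ a₀)) := by
    rw [derivative_map, heval]
    exact hu.map φ
  obtain ⟨a, haroot, hacong⟩ := hhens.is_henselian (F.map φ) hF₂ (φ a₀) ha₀₂ hu₂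
  -- `↑a` is a root of `P.map f` where `P = F.map O₁.subtype`
  set P : K₁[X] := F.map (O₁.subtype) with hP
  have hPmonic : P.Monic := hF.map _
  have hPa : (P.map f).eval (a : K₂) = 0 := by
    have hcomp : f.comp O₁.subtype = (O₂.subtype).comp φ := RingHom.ext fun x => rfl
    have : P.map f = (F.map φ).map O₂.subtype := by
      rw [hP, Polynomial.map_map, Polynomial.map_map, hcomp]
    rw [this, Polynomial.eval_map, show ((a : K₂)) = O₂.subtype a from rfl,
      Polynomial.eval₂_at_apply, show (F.map φ).eval a = 0 from haroot, map_zero]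
  -- `↑a` is algebraic over `K₁`
  letI : Algebra K₁ K₂ := f.toAlgebra
  have halg : algebraMap K₁ K₂ = f := rfl
  have hint : IsIntegral K₁ (a : K₂) := by
    refine ⟨P, hPmonic, ?_⟩
    rw [← eval_map, halg, hPa]
  set g := minpoly K₁ (a : K₂) with hg
  have girr : Irreducible g := minpoly.irreducible hint
  have hga : (g.map f).eval (a : K₂) = 0 := by
    rw [← halg, eval_map, ← aeval_def, minpoly.aeval]
  obtain ⟨b, hb⟩ := root_transfer f hec g ⟨a, hga⟩
  obtain ⟨c, hc⟩ := (dvd_iff_isRoot.2 hb : (X - C b) ∣ g)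
  have hcu : IsUnit c := by
    rcases girr.isUnit_or_isUnit hc with h | h
    · exact absurd h (not_isUnit_X_sub_C b)
    · exact h
  obtain ⟨d, hd0, hdc⟩ := Polynomial.isUnit_iff.1 hcu
  have hab : (a : K₂) = f b := by
    rw [hc, ← hdc] at hga
    simp only [Polynomial.map_mul, Polynomial.map_sub, map_X, map_C, eval_mul, eval_sub,
      eval_X, eval_C] at hga
    have : f d ≠ 0 := fun h => hd0.ne_zero (f.injective (by rw [h, map_zero]))
    rcases mul_eq_zero.1 hga with h | h
    · exact sub_eq_zero.1 h
    · exact absurd h this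
  have hbO : b ∈ O₁ := by
    show f b ∈ O₂
    rw [← hab]; exact a.2
  set b' : O₁ := ⟨b, hbO⟩ with hb'
  have hφb : φ b' = a := Subtype.ext (by rw [hφval]; exact hab.symm)
  refine ⟨b', ?_, ?_⟩
  · have : φ (F.eval b') = 0 := by
      rw [← heval, hφb]
      exact haroot
    exact hφinj (by rw [this, map_zero])
  · rw [IsLocalRing.mem_maximalIdeal, mem_nonunits_iff]
    intro h
    have : IsUnit (a - φ a₀) := by
      rw [← hφb, ← map_sub]
      exact h.map φ
    exact (IsLocalRing.mem_maximalIdeal _).1 hacong this
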